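/- arXiv:2003.10007 — 8 statements merged into one kernel-verified Lean document; each statement's English description precedes it below -/
import Mathlib

section
/- Let F be a field, let n ≥ 1, k ≥ 1 and g ≥ 1 be integers, and let α = (α_1, …, α_n) be an injective tuple of elements of F. Then the g-fold star-product of the Reed–Solomon code RS_k(α) with itself equals the Reed–Solomon code of dimension min(g(k−1)+1, n); that is, the linear span of {v_1 ⋆ ⋯ ⋆ v_g : v_i ∈ RS_k(α) for all i ∈ [g]} equals RS_{min(g(k−1)+1, n)}(α). -/
/-- The Reed–Solomon code `RS_m(α)` of length `n` over `F`: the set of evaluation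
vectors `(φ(α_1), …, φ(α_n))` of polynomials `φ` of degree `< m`. -/
noncomputable def RScode (F : Type*) [Field F] {n : ℕ} (α : Fin n → F) (m : ℕ) :
    Submodule F (Fin n → F) :=
  (Polynomial.degreeLT F m).map (LinearMap.pi fun i => Polynomial.leval (α i))

lemma eval_mem_RScode (F : Type*) [Field F] {n : ℕ} (α : Fin n → F) {m : ℕ}
    {p : Polynomial F} (hp : p ∈ Polynomial.degreeLT F m) :
    (fun j => p.eval (α j)) ∈ RScode F α m := by
  exact ⟨p, hp, by ext j; simp [LinearMap.pi_apply]⟩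

lemma RScode_mono (F : Type*) [Field F] {n : ℕ} (α : Fin n → F) {m₁ m₂ : ℕ}
    (h : m₁ ≤ m₂) : RScode F α m₁ ≤ RScode F α m₂ :=
  Submodule.map_mono (Polynomial.degreeLT_mono h)

lemma RScode_top (F : Type*) [Field F] {n : ℕ} (α : Fin n → F)
    (hα : Function.Injective α) : RScode F α n = ⊤ := by
  rw [eq_top_iff]
  intro v _
  refine ⟨Lagrange.interpolate Finset.univ α v, ?_, ?_⟩
  · refine Polynomial.mem_degreeLT.2 ?_
    have := Lagrange.degree_interpolate_lt (r := v) (s := Finset.univ)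
      (Set.injOn_of_injective hα)
    simpa using this
  · ext j
    simp only [LinearMap.pi_apply, Polynomial.leval_apply]
    exact Lagrange.eval_interpolate_at_node (r := v)
      (Set.injOn_of_injective hα) (Finset.mem_univ j)

/-- Decompose `d ≤ g * c` as a sum of `g` numbers each at most `c`. -/
lemma exists_decomp (g c : ℕ) : ∀ d ≤ g * c, ∃ e : Fin g → ℕ,
    (∀ i, e i ≤ c) ∧ ∑ i, e i = d := by
  induction g with
  | zero =>
      intro d hd
      simp only [Nat.zero_mul, Nat.le_zero] at hd
      exact ⟨fun i => 0, fun i => Nat.zero_le _, by simp [hd]⟩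
  | succ g ih =>
      intro d hd
      have h1 : d - min c d ≤ g * c := by
        have hsm : (g + 1) * c = g * c + c := Nat.succ_mul g c
        rcases le_total c d with h | h
        · simp only [min_eq_left h]
          omega
        · simp [min_eq_right h]
      obtain ⟨e, he1, he2⟩ := ih _ h1
      refine ⟨Fin.cons (min c d) e, ?_, ?_⟩
      · intro i
        refine Fin.cases ?_ ?_ i
        · exact min_le_left _ _
        · intro j; simpa using he1 j
      · rw [Fin.sum_cons, he2]
        omega

/-- **Star-product of Reed–Solomon codes.** For an injective evaluation vector `α`,
the `g`-fold star-product of `RS_k(α)` with itself (the span of componentwise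
products of `g` codewords of `RS_k(α)`) is `RS_{min(g(k-1)+1, n)}(α)`. -/
theorem rs_star_product (F : Type*) [Field F] (n k g : ℕ) (hn : 1 ≤ n) (hk : 1 ≤ k)
    (hg : 1 ≤ g) (α : Fin n → F) (hα : Function.Injective α) :
    Submodule.span F
      {v : Fin n → F | ∃ w : Fin g → Fin n → F,
        (∀ i, w i ∈ RScode F α k) ∧ v = fun j => ∏ i, w i j}
      = RScode F α (min (g * (k - 1) + 1) n) := by
  set m := g * (k - 1) + 1 with hm
  have main : Submodule.span F
      {v : Fin n → F | ∃ w : Fin g → Fin n → F,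
        (∀ i, w i ∈ RScode F α k) ∧ v = fun j => ∏ i, w i j}
      = RScode F α m := by
    apply le_antisymm
    · rw [Submodule.span_le]
      rintro v ⟨w, hw, rfl⟩
      choose p hp hpe using fun i => (hw i : _)
      have hv : (fun j => ∏ i, w i j) = fun j => (∏ i, p i).eval (α j) := by
        ext j
        rw [Polynomial.eval_prod]
        refine Finset.prod_congr rfl fun i _ => ?_
        rw [← hpe i]
        simp [LinearMap.pi_apply]
      rw [hv]
      refine eval_mem_RScode F α (Polynomial.mem_degreeLT.2 ?_)
      have hdeg : (∏ i, p i).natDegree ≤ g * (k - 1) := by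
        refine le_trans (Polynomial.natDegree_prod_le _ _) ?_
        have : ∀ i : Fin g, (p i).natDegree ≤ k - 1 := by
          intro i
          have := Polynomial.mem_degreeLT.1 (hp i)
          rcases eq_or_ne (p i) 0 with h0 | h0
          · simp [h0]
          · have := (Polynomial.degree_eq_natDegree h0) ▸ this
            have : (p i).natDegree < k := by exact_mod_cast this
            omega
        calc ∑ i, (p i).natDegree ≤ ∑ _i : Fin g, (k - 1) :=
              Finset.sum_le_sum fun i _ => this i
          _ = g * (k - 1) := by simp [Finset.sum_const, mul_comm]
      calc (∏ i, p i).degree ≤ ((∏ i, p i).natDegree : WithBot ℕ) :=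
            Polynomial.degree_le_natDegree
        _ ≤ (g * (k - 1) : ℕ) := by exact_mod_cast hdeg
        _ < (m : ℕ) := by exact_mod_cast Nat.lt_succ_self _
    · classical
      rw [RScode, Polynomial.degreeLT_eq_span_X_pow, Submodule.map_span,
        Submodule.span_le]
      rintro v ⟨q, hq, rfl⟩
      simp only [Finset.coe_image, Set.mem_image, Finset.mem_coe,
        Finset.mem_range] at hq
      obtain ⟨d, hd, rfl⟩ := hq
      have hd' : d ≤ g * (k - 1) := by omega
      obtain ⟨e, he1, he2⟩ := exists_decomp g (k - 1) d hd'
      apply Submodule.subset_span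
      refine ⟨fun i j => α j ^ (e i), fun i => ?_, ?_⟩
      · have : (fun j => (Polynomial.X ^ (e i) : Polynomial F).eval (α j))
            ∈ RScode F α k := by
          refine eval_mem_RScode F α (Polynomial.mem_degreeLT.2 ?_)
          rw [Polynomial.degree_X_pow]
          exact_mod_cast Nat.lt_of_le_of_lt (he1 i) (by omega)
        simpa using this
      · ext j
        simp only [LinearMap.pi_apply, Polynomial.leval_apply, Polynomial.eval_pow,
          Polynomial.eval_X]
        rw [Finset.prod_pow_eq_pow_sum, he2]
  rcases le_or_gt m n with h | h
  · rw [min_eq_left h, main]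
  · rw [min_eq_right h.le, main, RScode_top F α hα, eq_top_iff]
    exact le_trans (RScode_top F α hα).ge (RScode_mono F α h.le)
end

section
/- (Shearer's Lemma.) Let n and κ be natural numbers, let S_1, …, S_n be finite nonempty sets, and let p be a probability mass function on S_1 × ⋯ × S_n. Let 𝒮 be a finite collection (multiset) of subsets of {1, …, n} such that every index j ∈ {1, …, n} is contained in at least κ members of 𝒮. Then Σ_{A ∈ 𝒮} H(p_A) ≥ κ · H(p), where p_A is the marginal of p on the coordinates in A. -/
open Finset

/-- Shannon entropy of a probability mass function on a finite set (with the
convention `0 · log 0 = 0`, built into `Real.negMulLog`). -/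
noncomputable def entropy {α : Type*} [Fintype α] (p : α → ℝ) : ℝ :=
  ∑ x, Real.negMulLog (p x)

/-- The marginal of a pmf `p` on `∏ j, S j` on the coordinates in `A`: the
pushforward of `p` under the restriction map onto the coordinates in `A`. -/
noncomputable def marginal {n : ℕ} {S : Fin n → Type*} [∀ j, Fintype (S j)]
    [∀ j, DecidableEq (S j)] (p : (∀ j, S j) → ℝ) (A : Finset (Fin n))
    (y : ∀ j : {x : Fin n // x ∈ A}, S j.1) : ℝ :=
  ∑ x : ∀ j, S j, if (fun j : {x : Fin n // x ∈ A} => x j.1) = y then p x else 0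

namespace ShearerAux

variable {n : ℕ} {S : Fin n → Type*} [∀ j, Fintype (S j)] [∀ j, DecidableEq (S j)]

noncomputable def m (p : (∀ j, S j) → ℝ) (A : Finset (Fin n)) (x : ∀ j, S j) : ℝ :=
  ∑ x', if ∀ j ∈ A, x' j = x j then p x' else 0

variable {p : (∀ j, S j) → ℝ} {A B : Finset (Fin n)} {x y : ∀ j, S j}

lemma m_nonneg (hp0 : ∀ x, 0 ≤ p x) : 0 ≤ m p A x := by
  refine Finset.sum_nonneg fun x' _ => ?_
  by_cases h : ∀ j ∈ A, x' j = x j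
  · rw [if_pos h]; exact hp0 x'
  · rw [if_neg h]

lemma m_empty (hp1 : ∑ x, p x = 1) : m p ∅ x = 1 := by
  simp [m, hp1]

lemma m_anti (hp0 : ∀ x, 0 ≤ p x) (hAB : A ⊆ B) : m p B x ≤ m p A x := by
  refine Finset.sum_le_sum fun x' _ => ?_
  by_cases h : ∀ j ∈ B, x' j = x j
  · rw [if_pos h, if_pos fun j hj => h j (hAB hj)]
  · rw [if_neg h]
    by_cases h' : ∀ j ∈ A, x' j = x j
    · rw [if_pos h']; exact hp0 x'
    · rw [if_neg h']

lemma le_m (hp0 : ∀ x, 0 ≤ p x) : p x ≤ m p A x := by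
  have := Finset.single_le_sum (f := fun x' => if ∀ j ∈ A, x' j = x j then p x' else 0)
    (fun x' _ => by
      show (0:ℝ) ≤ if ∀ j ∈ A, x' j = x j then p x' else 0
      by_cases h : ∀ j ∈ A, x' j = x j
      · rw [if_pos h]; exact hp0 x'
      · rw [if_neg h]) (Finset.mem_univ x)
  simpa [m] using this

lemma m_local (h : ∀ j ∈ A, x j = y j) : m p A x = m p A y := by
  refine Finset.sum_congr rfl fun x' _ => ?_
  by_cases hc : ∀ j ∈ A, x' j = x j
  · rw [if_pos hc, if_pos fun j hj => (hc j hj).trans (h j hj)]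
  · rw [if_neg hc, if_neg fun hc' => hc fun j hj => (hc' j hj).trans (h j hj).symm]

lemma m_univ : m p univ x = p x := by
  have : ∀ x' : ∀ j, S j, (∀ j ∈ (univ : Finset (Fin n)), x' j = x j) ↔ x' = x := by
    intro x'
    constructor
    · intro h; funext j; exact h j (mem_univ j)
    · rintro rfl; intro j _; rfl
  calc m p univ x = ∑ x', if x' = x then p x' else 0 := by
        refine Finset.sum_congr rfl fun x' _ => ?_
        by_cases h : x' = x
        · rw [if_pos ((this x').mpr h), if_pos h]
        · rw [if_neg (fun h' => h ((this x').mp h')), if_neg h]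
    _ = p x := by rw [Finset.sum_ite_eq' univ x p, if_pos (mem_univ x)]

/-- number of points in a fiber over a `D`-pattern -/
def ND (D : Finset (Fin n)) : ℕ := ∏ j : {j : Fin n // j ∉ D}, Fintype.card (S j)

lemma card_fiber (D : Finset (Fin n)) (z : ∀ j, S j) :
    (univ.filter fun x : ∀ j, S j => ∀ j ∈ D, x j = z j).card = ND (S := S) D := by
  classical
  rw [← Fintype.card_subtype]
  have e : {x : ∀ j, S j // ∀ j ∈ D, x j = z j} ≃ (∀ j : {j : Fin n // j ∉ D}, S j) :=
    { toFun := fun x j => x.1 j.1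
      invFun := fun f => ⟨fun j => if h : j ∈ D then z j else f ⟨j, h⟩, by
        intro j hj; simp [hj]⟩
      left_inv := by
        rintro ⟨x, hx⟩
        ext j
        by_cases h : j ∈ D
        · simp [h, hx j h]
        · simp [h]
      right_inv := by
        intro f
        funext j
        simp [j.2] }
  rw [Fintype.card_congr e, Fintype.card_pi]
  rfl

-- chunk B: swap lemma and pair count
variable (p A) in
lemma sum_m_mul (F : (∀ j, S j) → ℝ)
    (hF : ∀ x y, (∀ j ∈ A, x j = y j) → F x = F y) :
    ∑ x, m p A x * F x = (ND (S := S) A : ℝ) * ∑ x, p x * F x := by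
  classical
  have : ∑ x, m p A x * F x
      = ∑ x, ∑ x', if ∀ j ∈ A, x' j = x j then p x' * F x else 0 := by
    refine Finset.sum_congr rfl fun x _ => ?_
    rw [m, Finset.sum_mul]
    refine Finset.sum_congr rfl fun x' _ => ?_
    by_cases h : ∀ j ∈ A, x' j = x j
    · rw [if_pos h, if_pos h]
    · rw [if_neg h, if_neg h, zero_mul]
  rw [this, Finset.sum_comm]
  have : ∀ x' : ∀ j, S j,
      (∑ x, if ∀ j ∈ A, x' j = x j then p x' * F x else 0)
        = (ND (S := S) A : ℝ) * (p x' * F x') := by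
    intro x'
    have h1 : ∀ x : ∀ j, S j, (if ∀ j ∈ A, x' j = x j then p x' * F x else 0)
        = (if ∀ j ∈ A, x j = x' j then p x' * F x' else 0) := by
      intro x
      by_cases h : ∀ j ∈ A, x' j = x j
      · rw [if_pos h, if_pos (fun j hj => (h j hj).symm), hF x x' (fun j hj => (h j hj).symm)]
      · rw [if_neg h, if_neg (fun h' => h fun j hj => (h' j hj).symm)]
    rw [Finset.sum_congr rfl fun x _ => h1 x, ← Finset.sum_filter,
      Finset.sum_const, card_fiber, nsmul_eq_mul]
  rw [Finset.sum_congr rfl fun x' _ => this x', ← Finset.mul_sum]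

lemma card_fiber_pair (hC : A ∩ B ≠ ∅ ∨ True) (u v : ∀ j, S j) :
    ((univ : Finset (∀ j, S j)).filter fun x =>
        (∀ j ∈ A, x j = u j) ∧ (∀ j ∈ B, x j = v j)).card
      = if ∀ j ∈ A ∩ B, u j = v j then ND (S := S) (A ∪ B) else 0 := by
  classical
  by_cases hcompat : ∀ j ∈ A ∩ B, u j = v j
  · rw [if_pos hcompat]
    set w : ∀ j, S j := fun j => if j ∈ A then u j else v j with hw
    have hiff : ∀ x : ∀ j, S j,
        ((∀ j ∈ A, x j = u j) ∧ (∀ j ∈ B, x j = v j)) ↔ (∀ j ∈ A ∪ B, x j = w j) := by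
      intro x
      constructor
      · rintro ⟨ha, hb⟩ j hj
        show x j = if j ∈ A then u j else v j
        by_cases hjA : j ∈ A
        · rw [if_pos hjA]; exact ha j hjA
        · have hjB : j ∈ B := by
            rcases Finset.mem_union.mp hj with h | h
            · exact absurd h hjA
            · exact h
          rw [if_neg hjA]; exact hb j hjB
      · intro h
        constructor
        · intro j hj
          have h2 : x j = if j ∈ A then u j else v j := h j (Finset.mem_union_left _ hj)
          rwa [if_pos hj] at h2
        · intro j hj
          have h2 : x j = if j ∈ A then u j else v j := h j (Finset.mem_union_right _ hj)
          by_cases hjA : j ∈ A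
          · rw [if_pos hjA] at h2
            rw [h2]
            exact hcompat j (Finset.mem_inter.mpr ⟨hjA, hj⟩)
          · rwa [if_neg hjA] at h2
    rw [show ((univ : Finset (∀ j, S j)).filter fun x =>
        (∀ j ∈ A, x j = u j) ∧ (∀ j ∈ B, x j = v j))
      = (univ.filter fun x => ∀ j ∈ A ∪ B, x j = w j) from
        Finset.filter_congr fun x _ => hiff x]
    exact card_fiber _ _
  · rw [if_neg hcompat]
    rw [Finset.card_eq_zero, Finset.filter_eq_empty_iff]
    intro x _
    rintro ⟨ha, hb⟩
    apply hcompat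
    intro j hj
    have hjA := Finset.mem_inter.mp hj
    rw [← ha j hjA.1, ← hb j hjA.2]

-- chunk C : the key inequality
lemma ball_eq_symm {A : Finset (Fin n)} {u x : ∀ j, S j} :
    (∀ j ∈ A, u j = x j) ↔ (∀ j ∈ A, x j = u j) :=
  ⟨fun h j hj => (h j hj).symm, fun h j hj => (h j hj).symm⟩

variable [∀ j, Nonempty (S j)]

lemma ND_pos (D : Finset (Fin n)) : 0 < (ND (S := S) D : ℝ) := by
  have : 0 < ND (S := S) D := Finset.prod_pos fun j _ => Fintype.card_pos
  exact_mod_cast this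

lemma key_ineq (p : (∀ j, S j) → ℝ) (hp0 : ∀ x, 0 ≤ p x) (hp1 : ∑ x, p x = 1)
    (A B : Finset (Fin n)) :
    ∑ x, p x * (if m p (A ∪ B) x = 0 then 0 else
      m p A x * m p B x / (m p (A ∪ B) x * m p (A ∩ B) x)) ≤ 1 := by
  classical
  set U := A ∪ B with hUdef
  set C := A ∩ B with hCdef
  set R : (∀ j, S j) → ℝ := fun x => if m p U x = 0 then 0 else
      m p A x * m p B x / (m p U x * m p C x) with hR
  have hAU : A ⊆ U := Finset.subset_union_left
  have hBU : B ⊆ U := Finset.subset_union_right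
  have hCU : C ⊆ U := Finset.inter_subset_union
  have hCA : C ⊆ A := Finset.inter_subset_left
  have hRloc : ∀ x y, (∀ j ∈ U, x j = y j) → R x = R y := by
    intro x y h
    have hA : m p A x = m p A y := m_local fun j hj => h j (hAU hj)
    have hB : m p B x = m p B y := m_local fun j hj => h j (hBU hj)
    have hUU : m p U x = m p U y := m_local fun j hj => h j hj
    have hCC : m p C x = m p C y := m_local fun j hj => h j (hCU hj)
    show (if m p U x = 0 then 0 else m p A x * m p B x / (m p U x * m p C x))
        = (if m p U y = 0 then 0 else m p A y * m p B y / (m p U y * m p C y))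
    rw [hA, hB, hUU, hCC]
  have hswap : ∑ x, m p U x * R x = (ND (S := S) U : ℝ) * ∑ x, p x * R x :=
    sum_m_mul p U R hRloc
  -- step b: pointwise identity
  have hstepb : ∀ x : ∀ j, S j, m p U x * R x
      = (if m p U x = 0 then 0 else m p A x * m p B x / m p C x) := by
    intro x
    show m p U x * (if m p U x = 0 then 0 else
        m p A x * m p B x / (m p U x * m p C x)) = _
    by_cases h : m p U x = 0
    · rw [if_pos h, if_pos h, mul_zero]
    · rw [if_neg h, if_neg h, div_mul_eq_div_div_swap, mul_comm,
        div_mul_cancel₀ _ h]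
  -- step c: pointwise inequality
  have hstepc : ∀ x : ∀ j, S j,
      (if m p U x = 0 then 0 else m p A x * m p B x / m p C x)
      ≤ (if m p C x = 0 then 0 else m p A x * m p B x / m p C x) := by
    intro x
    by_cases h : m p U x = 0
    · rw [if_pos h]
      by_cases h' : m p C x = 0
      · rw [if_pos h']
      · rw [if_neg h']
        exact div_nonneg (mul_nonneg (m_nonneg hp0) (m_nonneg hp0)) (m_nonneg hp0)
    · rw [if_neg h]
      have hc : m p C x ≠ 0 := fun h0 =>
        h (le_antisymm (h0 ▸ m_anti hp0 hCU) (m_nonneg hp0))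
      rw [if_neg hc]
  -- step d : the big expansion
  set t : (∀ j, S j) → (∀ j, S j) → (∀ j, S j) → ℝ := fun u v x =>
    if m p C x = 0 then 0 else
      ((if ∀ j ∈ A, x j = u j then p u else 0) * (if ∀ j ∈ B, x j = v j then p v else 0)
        / m p C x) with ht
  have claim1 : ∀ x : ∀ j, S j,
      (if m p C x = 0 then 0 else m p A x * m p B x / m p C x)
      = ∑ u, ∑ v, t u v x := by
    intro x
    by_cases h : m p C x = 0
    · rw [if_pos h]
      symm
      refine Finset.sum_eq_zero fun u _ => Finset.sum_eq_zero fun v _ => ?_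
      show (if m p C x = 0 then _ else _) = (0:ℝ)
      rw [if_pos h]
    · rw [if_neg h, m, m, Finset.sum_mul_sum, Finset.sum_div]
      refine Finset.sum_congr rfl fun u _ => ?_
      rw [Finset.sum_div]
      refine Finset.sum_congr rfl fun v _ => ?_
      show _ = (if m p C x = 0 then _ else _)
      rw [if_neg h, if_congr (ball_eq_symm (A := A)) rfl rfl,
        if_congr (ball_eq_symm (A := B)) rfl rfl]
  have claim2 : ∀ u v : ∀ j, S j, ∑ x, t u v x
      = (if ∀ j ∈ C, u j = v j then (ND (S := S) U : ℝ) else 0)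
        * (if m p C u = 0 then 0 else p u * p v / m p C u) := by
    intro u v
    by_cases hmu : m p C u = 0
    · rw [if_pos hmu, mul_zero]
      refine Finset.sum_eq_zero fun x _ => ?_
      show (if m p C x = 0 then _ else _) = (0:ℝ)
      by_cases hcx : m p C x = 0
      · rw [if_pos hcx]
      · rw [if_neg hcx]
        by_cases hax : ∀ j ∈ A, x j = u j
        · exact absurd (hmu ▸ m_local (A := C) fun j hj => hax j (hCA hj)) hcx
        · rw [if_neg hax, zero_mul, zero_div]
    · have hpt : ∀ x : ∀ j, S j, t u v x
          = if (∀ j ∈ A, x j = u j) ∧ (∀ j ∈ B, x j = v j)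
              then p u * p v / m p C u else 0 := by
        intro x
        show (if m p C x = 0 then 0 else
          ((if ∀ j ∈ A, x j = u j then p u else 0) *
            (if ∀ j ∈ B, x j = v j then p v else 0) / m p C x)) = _
        by_cases hax : ∀ j ∈ A, x j = u j
        · by_cases hbx : ∀ j ∈ B, x j = v j
          · have hcx : m p C x = m p C u := m_local fun j hj => hax j (hCA hj)
            rw [hcx, if_neg hmu, if_pos hax, if_pos hbx, if_pos ⟨hax, hbx⟩]
          · rw [if_neg hbx, mul_zero, zero_div, ite_self,
              if_neg (fun hh => hbx hh.2)]
        · rw [if_neg hax, zero_mul, zero_div, ite_self,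
            if_neg (fun hh => hax hh.1)]
      rw [Finset.sum_congr rfl fun x _ => hpt x, ← Finset.sum_filter,
        Finset.sum_const, card_fiber_pair (Or.inr trivial) u v, nsmul_eq_mul,
        Nat.cast_ite, Nat.cast_zero, ← hCdef, ← hUdef, if_neg hmu]
  have claim3 : ∀ u : ∀ j, S j,
      ∑ v, (if ∀ j ∈ C, u j = v j then (ND (S := S) U : ℝ) else 0)
        * (if m p C u = 0 then 0 else p u * p v / m p C u)
      = (ND (S := S) U : ℝ) * (if m p C u = 0 then 0 else p u) := by
    intro u
    by_cases hmu : m p C u = 0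
    · rw [if_pos hmu, mul_zero]
      refine Finset.sum_eq_zero fun v _ => ?_
      rw [if_pos hmu, mul_zero]
    · rw [if_neg hmu]
      have hterm : ∀ v : ∀ j, S j,
          (if ∀ j ∈ C, u j = v j then (ND (S := S) U : ℝ) else 0)
            * (if m p C u = 0 then 0 else p u * p v / m p C u)
          = (ND (S := S) U : ℝ) * p u / m p C u
            * (if ∀ j ∈ C, v j = u j then p v else 0) := by
        intro v
        rw [if_neg hmu]
        by_cases hcv : ∀ j ∈ C, u j = v j
        · rw [if_pos hcv, if_pos fun j hj => (hcv j hj).symm]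
          ring
        · rw [if_neg hcv, if_neg fun h => hcv fun j hj => (h j hj).symm,
            zero_mul, mul_zero]
      rw [Finset.sum_congr rfl fun v _ => hterm v, ← Finset.mul_sum]
      show (ND (S := S) U : ℝ) * p u / m p C u * m p C u = _
      rw [div_mul_cancel₀ _ hmu]
  -- assemble step d
  have hE : ∑ x, (if m p C x = 0 then 0 else m p A x * m p B x / m p C x)
      ≤ (ND (S := S) U : ℝ) := by
    calc ∑ x, (if m p C x = 0 then 0 else m p A x * m p B x / m p C x)
        = ∑ x : ∀ j, S j, ∑ u, ∑ v, t u v x :=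
          Finset.sum_congr rfl fun x _ => claim1 x
      _ = ∑ u, ∑ x : ∀ j, S j, ∑ v, t u v x := Finset.sum_comm
      _ = ∑ u, ∑ v, ∑ x, t u v x :=
          Finset.sum_congr rfl fun u _ => Finset.sum_comm
      _ = ∑ u, (ND (S := S) U : ℝ) * (if m p C u = 0 then 0 else p u) := by
          refine Finset.sum_congr rfl fun u _ => ?_
          rw [Finset.sum_congr rfl fun v _ => claim2 u v, claim3 u]
      _ = (ND (S := S) U : ℝ) * ∑ u, (if m p C u = 0 then 0 else p u) := by
          rw [Finset.mul_sum]
      _ ≤ (ND (S := S) U : ℝ) * ∑ u, p u := by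
          refine mul_le_mul_of_nonneg_left (Finset.sum_le_sum fun u _ => ?_)
            (le_of_lt (ND_pos U))
          by_cases h : m p C u = 0
          · rw [if_pos h]; exact hp0 u
          · rw [if_neg h]
      _ = (ND (S := S) U : ℝ) := by rw [hp1, mul_one]
  -- conclude
  have hfin : (ND (S := S) U : ℝ) * ∑ x, p x * R x ≤ (ND (S := S) U : ℝ) * 1 := by
    rw [mul_one, ← hswap]
    calc ∑ x, m p U x * R x
        = ∑ x, (if m p U x = 0 then 0 else m p A x * m p B x / m p C x) :=
          Finset.sum_congr rfl fun x _ => hstepb x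
      _ ≤ ∑ x, (if m p C x = 0 then 0 else m p A x * m p B x / m p C x) :=
          Finset.sum_le_sum fun x _ => hstepc x
      _ ≤ _ := hE
  exact le_of_mul_le_mul_left hfin (ND_pos U)

-- chunk D : hfun and its properties
noncomputable def hfun (p : (∀ j, S j) → ℝ) (A : Finset (Fin n)) : ℝ :=
  ∑ x, p x * (-Real.log (m p A x))

lemma marginal_restrict (p : (∀ j, S j) → ℝ) (A : Finset (Fin n)) (x : ∀ j, S j) :
    marginal p A (fun j => x j.1) = m p A x := by
  unfold marginal m
  refine Finset.sum_congr rfl fun x' _ => ?_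
  by_cases h : ∀ j ∈ A, x' j = x j
  · rw [if_pos h, if_pos (funext fun j => h j.1 j.2)]
  · rw [if_neg h, if_neg fun hf => h fun j hj => congrFun hf ⟨j, hj⟩]

lemma entropy_marginal (p : (∀ j, S j) → ℝ) (A : Finset (Fin n)) :
    entropy (marginal p A) = hfun p A := by
  classical
  set c : (∀ j : {x : Fin n // x ∈ A}, S j.1) → ℝ :=
    fun y => -Real.log (marginal p A y) with hc
  calc entropy (marginal p A) = ∑ y, marginal p A y * c y := by
        refine Finset.sum_congr rfl fun y _ => ?_
        rw [Real.negMulLog]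
        show -marginal p A y * Real.log (marginal p A y)
          = marginal p A y * -Real.log (marginal p A y)
        ring
    _ = ∑ y, ∑ x : ∀ j, S j,
          (if (fun j : {x : Fin n // x ∈ A} => x j.1) = y then p x * c y else 0) := by
        refine Finset.sum_congr rfl fun y _ => ?_
        rw [marginal, Finset.sum_mul]
        refine Finset.sum_congr rfl fun x _ => ?_
        by_cases h : (fun j : {x : Fin n // x ∈ A} => x j.1) = y
        · rw [if_pos h, if_pos h]
        · rw [if_neg h, if_neg h, zero_mul]
    _ = ∑ x : ∀ j, S j, ∑ y,
          (if (fun j : {x : Fin n // x ∈ A} => x j.1) = y then p x * c y else 0) :=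
        Finset.sum_comm
    _ = ∑ x : ∀ j, S j, p x * c (fun j => x j.1) := by
        refine Finset.sum_congr rfl fun x _ => ?_
        rw [Finset.sum_ite_eq, if_pos (Finset.mem_univ _)]
    _ = hfun p A := by
        refine Finset.sum_congr rfl fun x _ => ?_
        rw [hc]
        show p x * -Real.log (marginal p A fun j => x j.1) = _
        rw [marginal_restrict]

variable {p : (∀ j, S j) → ℝ}

lemma hfun_empty (hp1 : ∑ x, p x = 1) : hfun p (∅ : Finset (Fin n)) = 0 := by
  refine Finset.sum_eq_zero fun x _ => ?_
  rw [m_empty hp1, Real.log_one, neg_zero, mul_zero]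

lemma hfun_mono (hp0 : ∀ x, 0 ≤ p x) {A B : Finset (Fin n)} (hAB : A ⊆ B) :
    hfun p A ≤ hfun p B := by
  refine Finset.sum_le_sum fun x _ => ?_
  by_cases hpx : p x = 0
  · rw [hpx, zero_mul, zero_mul]
  · have hpos : 0 < p x := lt_of_le_of_ne (hp0 x) (Ne.symm hpx)
    have hmB : 0 < m p B x := lt_of_lt_of_le hpos (le_m hp0)
    have hlog : Real.log (m p B x) ≤ Real.log (m p A x) :=
      Real.log_le_log hmB (m_anti hp0 hAB)
    exact mul_le_mul_of_nonneg_left (neg_le_neg hlog) (hp0 x)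

lemma hfun_submodular [∀ j, Nonempty (S j)] (hp0 : ∀ x, 0 ≤ p x)
    (hp1 : ∑ x, p x = 1) (A B : Finset (Fin n)) :
    hfun p (A ∪ B) + hfun p (A ∩ B) ≤ hfun p A + hfun p B := by
  classical
  set U := A ∪ B with hUdef
  set C := A ∩ B with hCdef
  set R : (∀ j, S j) → ℝ := fun x => if m p U x = 0 then 0 else
      m p A x * m p B x / (m p U x * m p C x) with hR
  have key : ∑ x, p x * R x ≤ 1 := key_ineq p hp0 hp1 A B
  have hpw : ∀ x : ∀ j, S j,
      p x * (-Real.log (m p U x)) + p x * (-Real.log (m p C x))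
        - p x * (-Real.log (m p A x)) - p x * (-Real.log (m p B x))
      ≤ p x * R x - p x := by
    intro x
    by_cases hpx : p x = 0
    · rw [hpx]; simp
    · have hpos : 0 < p x := lt_of_le_of_ne (hp0 x) (Ne.symm hpx)
      have hA : 0 < m p A x := lt_of_lt_of_le hpos (le_m hp0)
      have hB : 0 < m p B x := lt_of_lt_of_le hpos (le_m hp0)
      have hU : 0 < m p U x := lt_of_lt_of_le hpos (le_m hp0)
      have hC : 0 < m p C x := lt_of_lt_of_le hpos (le_m hp0)
      have hRx : R x = m p A x * m p B x / (m p U x * m p C x) := by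
        show (if m p U x = 0 then 0 else _) = _
        rw [if_neg (ne_of_gt hU)]
      have htpos : 0 < m p A x * m p B x / (m p U x * m p C x) :=
        div_pos (mul_pos hA hB) (mul_pos hU hC)
      have hlog : Real.log (m p A x * m p B x / (m p U x * m p C x))
          = Real.log (m p A x) + Real.log (m p B x)
            - (Real.log (m p U x) + Real.log (m p C x)) := by
        rw [Real.log_div (ne_of_gt (mul_pos hA hB)) (ne_of_gt (mul_pos hU hC)),
          Real.log_mul (ne_of_gt hA) (ne_of_gt hB),
          Real.log_mul (ne_of_gt hU) (ne_of_gt hC)]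
      have hle := Real.log_le_sub_one_of_pos htpos
      have := mul_le_mul_of_nonneg_left hle (hp0 x)
      rw [hlog] at this
      rw [hRx]
      nlinarith [this]
  have hsum : hfun p U + hfun p C - hfun p A - hfun p B
      ≤ (∑ x, p x * R x) - 1 := by
    rw [← hp1]
    rw [hfun, hfun, hfun, hfun, ← Finset.sum_add_distrib, ← Finset.sum_sub_distrib,
      ← Finset.sum_sub_distrib, ← Finset.sum_sub_distrib]
    exact Finset.sum_le_sum fun x _ => hpw x
  linarith

lemma hfun_univ : hfun p (univ : Finset (Fin n)) = entropy p := by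
  refine Finset.sum_congr rfl fun x _ => ?_
  rw [m_univ, Real.negMulLog]
  ring

-- chunk E : the combinatorial uncrossing argument
section Comb

variable {N : ℕ} {f : Finset (Fin N) → ℝ}

def transL : Finset (Fin N) → List (Finset (Fin N)) → List (Finset (Fin N))
  | _, [] => []
  | B, A :: L => (A ∩ B) :: transL (A ∪ B) L

def uniL : Finset (Fin N) → List (Finset (Fin N)) → Finset (Fin N)
  | B, [] => B
  | B, A :: L => uniL (A ∪ B) L

lemma uncross (hsub : ∀ A B, f (A ∪ B) + f (A ∩ B) ≤ f A + f B) :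
    ∀ (L : List (Finset (Fin N))) (B : Finset (Fin N)),
    f (uniL B L) + ((transL B L).map f).sum ≤ f B + (L.map f).sum := by
  intro L
  induction L with
  | nil => intro B; simp [uniL, transL]
  | cons A L ih =>
    intro B
    have h1 := ih (A ∪ B)
    have h2 := hsub A B
    show f (uniL (A ∪ B) L) + (f (A ∩ B) + ((transL (A ∪ B) L).map f).sum)
      ≤ f B + (f A + (L.map f).sum)
    linarith

lemma cover_trans : ∀ (L : List (Finset (Fin N))) (B : Finset (Fin N)) (j : Fin N),
    L.countP (fun A => decide (j ∈ A))
      ≤ (transL B L).countP (fun A => decide (j ∈ A)) + (if j ∈ B then 0 else 1) := by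
  intro L
  induction L with
  | nil => intro B j; simp [transL]
  | cons A L ih =>
    intro B j
    have h := ih (A ∪ B) j
    by_cases hA : j ∈ A <;> by_cases hB : j ∈ B <;>
      simp only [transL, List.countP_cons, Finset.mem_inter, Finset.mem_union,
        hA, hB, decide_eq_true_eq, and_true, and_false, true_and, false_and,
        if_true, if_false, or_self, or_true, true_or, false_or,
        decide_true, decide_false] at h ⊢ <;>
      omega

lemma mem_uniL : ∀ (L : List (Finset (Fin N))) (B : Finset (Fin N)) (j : Fin N),
    (j ∈ B ∨ 0 < L.countP (fun A => decide (j ∈ A))) → j ∈ uniL B L := by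
  intro L
  induction L with
  | nil => intro B j h; rcases h with h | h
           · exact h
           · simp at h
  | cons A L ih =>
    intro B j h
    show j ∈ uniL (A ∪ B) L
    refine ih (A ∪ B) j ?_
    rcases h with h | h
    · exact Or.inl (Finset.mem_union_right _ h)
    · by_cases hA : j ∈ A
      · exact Or.inl (Finset.mem_union_left _ hA)
      · right
        rw [List.countP_cons] at h
        simpa [hA] using h

lemma comb (hmono : ∀ A B : Finset (Fin N), A ⊆ B → f A ≤ f B)
    (hsub : ∀ A B, f (A ∪ B) + f (A ∩ B) ≤ f A + f B) (hempty : f ∅ = 0) :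
    ∀ (κ : ℕ) (L : List (Finset (Fin N))),
      (∀ j, κ ≤ L.countP (fun A => decide (j ∈ A))) →
      (κ : ℝ) * f univ ≤ (L.map f).sum := by
  intro κ
  induction κ with
  | zero =>
    intro L _
    rw [Nat.cast_zero, zero_mul]
    refine List.sum_nonneg fun a ha => ?_
    obtain ⟨A, _, rfl⟩ := List.mem_map.mp ha
    exact hempty ▸ hmono ∅ A (Finset.empty_subset A)
  | succ κ ih =>
    intro L hcov
    have h1 : uniL ∅ L = univ := Finset.eq_univ_iff_forall.mpr fun j =>
      mem_uniL L ∅ j (Or.inr (lt_of_lt_of_le (Nat.succ_pos κ) (hcov j)))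
    have h2 := uncross hsub L ∅
    rw [h1, hempty] at h2
    have h3 : ∀ j, κ ≤ (transL ∅ L).countP (fun A => decide (j ∈ A)) := by
      intro j
      have h4 := cover_trans L ∅ j
      have h5 := hcov j
      simp only [Finset.notMem_empty, if_false] at h4
      omega
    have h6 := ih (transL ∅ L) h3
    push_cast
    linarith

end Comb

end ShearerAux

/-- **Shearer's Lemma.** If `𝒮` is a finite collection (multiset) of subsets of
`{1, …, n}` such that every index `j` is contained in at least `κ` members of `𝒮`,
then `Σ_{A ∈ 𝒮} H(p_A) ≥ κ · H(p)` for any pmf `p` on a finite product. -/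
theorem shearer {n κ : ℕ} {S : Fin n → Type*} [∀ j, Fintype (S j)]
    [∀ j, DecidableEq (S j)] [∀ j, Nonempty (S j)]
    (p : (∀ j, S j) → ℝ) (hp0 : ∀ x, 0 ≤ p x) (hp1 : ∑ x, p x = 1)
    (𝒮 : Multiset (Finset (Fin n)))
    (hκ : ∀ j : Fin n, κ ≤ 𝒮.countP (fun A => j ∈ A)) :
    (κ : ℝ) * entropy p ≤ (𝒮.map (fun A => entropy (marginal p A))).sum := by
  classical
  induction 𝒮 using Quotient.inductionOn with
  | h L =>
    simp only [Multiset.quot_mk_to_coe, Multiset.coe_countP] at hκ ⊢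
    rw [Multiset.map_coe, Multiset.sum_coe]
    have hκ' : ∀ j : Fin n, κ ≤ L.countP (fun A => decide (j ∈ A)) := hκ
    have hmono : ∀ A B : Finset (Fin n), A ⊆ B →
        entropy (marginal p A) ≤ entropy (marginal p B) := by
      intro A B hAB
      rw [ShearerAux.entropy_marginal, ShearerAux.entropy_marginal]
      exact ShearerAux.hfun_mono hp0 hAB
    have hsub : ∀ A B : Finset (Fin n),
        entropy (marginal p (A ∪ B)) + entropy (marginal p (A ∩ B))
          ≤ entropy (marginal p A) + entropy (marginal p B) := by
      intro A B
      rw [ShearerAux.entropy_marginal, ShearerAux.entropy_marginal,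
        ShearerAux.entropy_marginal, ShearerAux.entropy_marginal]
      exact ShearerAux.hfun_submodular hp0 hp1 A B
    have hempty : entropy (marginal p (∅ : Finset (Fin n))) = 0 := by
      rw [ShearerAux.entropy_marginal]
      exact ShearerAux.hfun_empty hp1
    have huniv : entropy (marginal p (univ : Finset (Fin n))) = entropy p := by
      rw [ShearerAux.entropy_marginal]
      exact ShearerAux.hfun_univ
    have := ShearerAux.comb hmono hsub hempty κ L hκ'
    rw [huniv] at this
    exact this
end

section
/- For all natural numbers μ, η, κ, ν with μ ≥ 1, η ≤ μ and κ ≤ ν, the identity Σ_{τ=2}^{μ} (C(μ,τ) − C(η,τ)) · κ^{μ−τ} · (ν−κ)^{τ} = ν^{μ} − κ^{μ−η} · ν^{η} − (μ−η) · κ^{μ−1} · (ν−κ) holds (as an identity of integers), where C(a,b) denotes the binomial coefficient with the convention C(a,b) = 0 when b > a. -/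
lemma ppc_full_sum (m κ ν : ℕ) :
    ∑ τ ∈ Finset.range (m+1), (m.choose τ : ℤ) * (κ : ℤ) ^ (m - τ) *
        ((ν : ℤ) - (κ : ℤ)) ^ τ = (ν : ℤ) ^ m := by
  have h := add_pow ((ν : ℤ) - κ) (κ : ℤ) m
  simp only [sub_add_cancel] at h
  rw [h]
  apply Finset.sum_congr rfl
  intro τ hτ
  ring

lemma ppc_eta_sum (μ η κ ν : ℕ) (hη : η ≤ μ) :
    ∑ τ ∈ Finset.range (μ+1), (η.choose τ : ℤ) * (κ : ℤ) ^ (μ - τ) *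
        ((ν : ℤ) - (κ : ℤ)) ^ τ = (κ : ℤ) ^ (μ - η) * (ν : ℤ) ^ η := by
  rw [← Finset.sum_subset (Finset.range_subset_range.2 (by omega) :
      Finset.range (η+1) ⊆ Finset.range (μ+1))]
  · have : ∀ τ ∈ Finset.range (η+1),
        (η.choose τ : ℤ) * (κ : ℤ) ^ (μ - τ) * ((ν : ℤ) - (κ : ℤ)) ^ τ
        = (κ : ℤ) ^ (μ - η) * ((η.choose τ : ℤ) * (κ : ℤ) ^ (η - τ) *
            ((ν : ℤ) - (κ : ℤ)) ^ τ) := by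
      intro τ hτ
      simp only [Finset.mem_range] at hτ
      have : μ - τ = (μ - η) + (η - τ) := by omega
      rw [this, pow_add]; ring
    rw [Finset.sum_congr rfl this, ← Finset.mul_sum, ppc_full_sum]
  · intro τ hτ hτ'
    simp only [Finset.mem_range] at hτ hτ'
    rw [Nat.choose_eq_zero_of_lt (by omega)]
    simp

/-- The algebraic core of the achievable PPC rate (Theorem 5):
`Σ_{τ=2}^{μ} (C(μ,τ) − C(η,τ)) κ^{μ−τ} (ν−κ)^{τ}
  = ν^{μ} − κ^{μ−η} ν^{η} − (μ−η) κ^{μ−1} (ν−κ)`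
for natural numbers `μ ≥ 1`, `η ≤ μ`, `κ ≤ ν`, as an identity of integers
(with the convention `C(a,b) = 0` for `b > a`). -/
theorem ppc_rate_identity (μ η κ ν : ℕ) (hμ : 1 ≤ μ) (hη : η ≤ μ) (hκ : κ ≤ ν) :
    ∑ τ ∈ Finset.Icc 2 μ,
        ((μ.choose τ : ℤ) - (η.choose τ : ℤ)) * (κ : ℤ) ^ (μ - τ) *
          ((ν : ℤ) - (κ : ℤ)) ^ τ
      = (ν : ℤ) ^ μ - (κ : ℤ) ^ (μ - η) * (ν : ℤ) ^ η
          - ((μ : ℤ) - (η : ℤ)) * (κ : ℤ) ^ (μ - 1) * ((ν : ℤ) - (κ : ℤ)) := by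
  set f : ℕ → ℤ := fun τ =>
    ((μ.choose τ : ℤ) - (η.choose τ : ℤ)) * (κ : ℤ) ^ (μ - τ) *
      ((ν : ℤ) - (κ : ℤ)) ^ τ with hf
  have hsplit : Finset.range (μ+1) = insert 0 (insert 1 (Finset.Icc 2 μ)) := by
    ext x
    simp only [Finset.mem_range, Finset.mem_insert, Finset.mem_Icc]
    omega
  have hfull : ∑ τ ∈ Finset.range (μ+1), f τ
      = (ν : ℤ) ^ μ - (κ : ℤ) ^ (μ - η) * (ν : ℤ) ^ η := by
    have : ∀ τ ∈ Finset.range (μ+1), f τ =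
        (μ.choose τ : ℤ) * (κ : ℤ) ^ (μ - τ) * ((ν : ℤ) - (κ : ℤ)) ^ τ
        - (η.choose τ : ℤ) * (κ : ℤ) ^ (μ - τ) * ((ν : ℤ) - (κ : ℤ)) ^ τ := by
      intro τ _; simp only [hf]; ring
    rw [Finset.sum_congr rfl this, Finset.sum_sub_distrib, ppc_full_sum,
      ppc_eta_sum μ η κ ν hη]
  rw [hsplit] at hfull
  rw [Finset.sum_insert (by simp), Finset.sum_insert (by simp)] at hfull
  have hf0 : f 0 = (κ : ℤ) ^ μ - (κ : ℤ) ^ μ := by simp [hf]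
  have hf1 : f 1 = ((μ : ℤ) - (η : ℤ)) * (κ : ℤ) ^ (μ - 1) *
      ((ν : ℤ) - (κ : ℤ)) := by
    simp [hf, Nat.choose_one_right]
  rw [hf0, hf1] at hfull
  linarith [hfull]
end

section
/- Let k, k̃, n be integers with 1 ≤ k ≤ k̃ ≤ n, and let n̂ and ν be as defined in the context. Then ν is given by the following case formula: ν = n − k̃ + k if ⌊n/k̃⌋ = 1 and n − ⌊n/k̃⌋·k̃ < k; ν = ⌊n/k̃⌋·k if ⌊n/k̃⌋ > 1 and n − ⌊n/k̃⌋·k̃ < k; and ν = ⌊n/k̃⌋·k + k if n − ⌊n/k̃⌋·k̃ ≥ k. -/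
/-- The number `n̂` of utilized databases of the systematic PPC scheme:
`n̂ = n` if `⌊n/k̃⌋ = 1` and `n − ⌊n/k̃⌋·k̃ < k`;
`n̂ = k + (⌊n/k̃⌋ − 1)·k̃` if `⌊n/k̃⌋ > 1` and `n − ⌊n/k̃⌋·k̃ < k`;
`n̂ = k + ⌊n/k̃⌋·k̃` if `n − ⌊n/k̃⌋·k̃ ≥ k`. -/
def nhat (k kt n : ℕ) : ℕ :=
  if n - n / kt * kt < k then
    (if n / kt = 1 then n else k + (n / kt - 1) * kt)
  else k + n / kt * kt

/-- `ν = n̂ − ⌊n̂/k̃⌋·(k̃ − k)`. -/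
def nuV (k kt n : ℕ) : ℕ := nhat k kt n - nhat k kt n / kt * (kt - k)

/-- Case formula for `ν` (Lemma "nu_formula" of the paper):
`ν = n − k̃ + k` if `⌊n/k̃⌋ = 1` and `n − ⌊n/k̃⌋·k̃ < k`;
`ν = ⌊n/k̃⌋·k` if `⌊n/k̃⌋ > 1` and `n − ⌊n/k̃⌋·k̃ < k`;
`ν = ⌊n/k̃⌋·k + k` if `n − ⌊n/k̃⌋·k̃ ≥ k`. -/
theorem nu_formula (k kt n : ℕ) (hk : 1 ≤ k) (hkkt : k ≤ kt) (hktn : kt ≤ n) :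
    (n / kt = 1 → n - n / kt * kt < k → nuV k kt n = n - kt + k) ∧
    (1 < n / kt → n - n / kt * kt < k → nuV k kt n = n / kt * k) ∧
    (k ≤ n - n / kt * kt → nuV k kt n = n / kt * k + k) := by
  have hktpos : 0 < kt := by omega
  refine ⟨?_, ?_, ?_⟩
  · intro hq hlt
    have hnh : nhat k kt n = n := by rw [nhat, if_pos hlt, if_pos hq]
    have hdiv : nhat k kt n / kt = 1 := by rw [hnh, hq]
    unfold nuV
    rw [hdiv, hnh, one_mul]
    omega
  · intro hq hlt
    set q := n / kt with hqdef
    have hq1 : q ≠ 1 := by omega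
    have hnh : nhat k kt n = k + (q - 1) * kt := by rw [nhat, if_pos hlt, if_neg hq1]
    by_cases hkk : k = kt
    · have hsucc : (q - 1) * kt + kt = q * kt := by
        rw [← Nat.succ_mul]; congr 1; omega
      have hnh' : nhat k kt n = q * kt := by rw [hnh, hkk]; omega
      have hdiv : nhat k kt n / kt = q := by
        rw [hnh', Nat.mul_div_cancel _ hktpos]
      unfold nuV
      rw [hdiv, hnh', hkk]
      simp
    · have hklt : k < kt := by omega
      have hdiv : nhat k kt n / kt = q - 1 := by
        rw [hnh, Nat.add_mul_div_right _ _ hktpos, Nat.div_eq_of_lt hklt, Nat.zero_add]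
      unfold nuV
      rw [hdiv, hnh]
      have h1 : (q - 1) * (kt - k) + (q - 1) * k = (q - 1) * kt := by
        rw [← Nat.mul_add]; congr 1; omega
      have h2 : (q - 1) * k + k = q * k := by
        rw [← Nat.succ_mul]; congr 1; omega
      omega
  · intro hge
    set q := n / kt with hqdef
    have hdm := Nat.div_add_mod n kt
    rw [← hqdef] at hdm
    have hcomm : kt * q = q * kt := Nat.mul_comm _ _
    have hmod : n % kt = n - q * kt := by omega
    have hmodlt : n % kt < kt := Nat.mod_lt _ hktpos
    have hklt : k < kt := by omega
    have hlt : ¬ (n - q * kt < k) := by omega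
    have hnh : nhat k kt n = k + q * kt := by rw [nhat, if_neg hlt]
    have hdiv : nhat k kt n / kt = q := by
      rw [hnh, Nat.add_mul_div_right _ _ hktpos, Nat.div_eq_of_lt hklt, Nat.zero_add]
    unfold nuV
    rw [hdiv, hnh]
    have h1 : q * (kt - k) + q * k = q * kt := by
      rw [← Nat.mul_add]; congr 1; omega
    omega
end

section
/- Let k, k̃, n be integers with 1 ≤ k ≤ k̃ ≤ n, and let n̂ and ν be as defined in the context. Then (n̂ = n and ν = k + min(k, n − k̃)) holds if and only if n − k̃ ≤ k. -/
/-- For `1 ≤ k ≤ k̃ ≤ n`: `n̂ = n` and `ν = k + min(k, n − k̃)` hold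
if and only if `n − k̃ ≤ k`. -/
theorem systematic_scheme_equivalence (k kt n : ℕ)
    (hk : 1 ≤ k) (hkkt : k ≤ kt) (hktn : kt ≤ n) :
    (nhat k kt n = n ∧ nuV k kt n = k + min k (n - kt)) ↔ n - kt ≤ k := by
  have hkt1 : 0 < kt := hk.trans hkkt
  have hq1 : 1 ≤ n / kt := (Nat.one_le_div_iff hkt1).mpr hktn
  have hdm := Nat.div_add_mod n kt  -- kt * (n / kt) + n % kt = n
  have hdm' : n / kt * kt + n % kt = n := by rw [Nat.mul_comm] at hdm; exact hdm
  have hrlt : n % kt < kt := Nat.mod_lt n hkt1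
  have hm1 : min k (n - kt) ≤ k := min_le_left _ _
  have hm2 : min k (n - kt) ≤ n - kt := min_le_right _ _
  have hm3 : min k (n - kt) = k ∨ min k (n - kt) = n - kt := min_choice _ _
  rcases Nat.lt_or_ge (n % kt) k with hc | hc
  · -- r < k
    have hcond : n - n / kt * kt < k := by omega
    rcases eq_or_lt_of_le hq1 with hq | hq
    · -- q = 1
      have hdiv : n / kt = 1 := hq.symm
      have hn : nhat k kt n = n := by
        rw [nhat, if_pos hcond, if_pos hdiv]
      have hkteq : kt + n % kt = n := by
        rw [hdiv, one_mul] at hdm'; exact hdm'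
      simp only [nuV, hn, hdiv, one_mul, eq_self_iff_true, true_and]
      omega
    · -- q ≥ 2
      have hq2 : 2 ≤ n / kt := hq
      have hqne : ¬ n / kt = 1 := by omega
      have hn : nhat k kt n = k + (n / kt - 1) * kt := by
        rw [nhat, if_pos hcond, if_neg hqne]
      have hsub : (n / kt - 1) * kt = n / kt * kt - kt := by
        rw [Nat.sub_mul, one_mul]
      have ht2 : 2 * kt ≤ n / kt * kt := Nat.mul_le_mul_right kt hq2
      rcases eq_or_lt_of_le hkkt with hke | hkl
      · -- k = kt
        subst hke
        have hn' : nhat k k n = n / k * k := by rw [hn, hsub]; omega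
        simp only [nuV, hn', Nat.sub_self, Nat.mul_zero, Nat.sub_zero]
        omega
      · -- k < kt : both sides false
        constructor
        · rintro ⟨h1, -⟩
          rw [hn, hsub] at h1
          omega
        · intro h
          exfalso
          omega
  · -- r ≥ k, hence k < kt
    have hkl : k < kt := lt_of_le_of_lt hc hrlt
    have hcond : ¬ n - n / kt * kt < k := by omega
    have hn : nhat k kt n = k + n / kt * kt := by rw [nhat, if_neg hcond]
    have hdiv : (k + n / kt * kt) / kt = n / kt := by
      rw [Nat.add_mul_div_right _ _ hkt1, Nat.div_eq_of_lt hkl, Nat.zero_add]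
    simp only [nuV, hn, hdiv]
    have hms : n / kt * (kt - k) = n / kt * kt - n / kt * k :=
      Nat.mul_sub (n / kt) kt k
    have hst : n / kt * k ≤ n / kt * kt := Nat.mul_le_mul_left _ hkkt
    rcases eq_or_lt_of_le hq1 with hq | hq
    · -- q = 1
      have e1 : n / kt * kt = kt := by rw [← hq, one_mul]
      have e2 : n / kt * k = k := by rw [← hq, one_mul]
      omega
    · -- q ≥ 2
      have ht2 : 2 * kt ≤ n / kt * kt := Nat.mul_le_mul_right kt hq
      have hs2 : 2 * k ≤ n / kt * k := Nat.mul_le_mul_right k hq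
      omega
end

section
/- Let k, k̃, n̂, κ, ν, ρ be natural numbers with k ≤ k̃ ≤ n̂ and ρ = ⌊n̂/k̃⌋·κ ≤ ν. Suppose there is a family of subsets rows_1, …, rows_ν of {1, …, n̂} such that: every column index j ∈ {1, …, n̂} belongs to exactly κ of the sets rows_i; |rows_i| ≥ k̃ for each i ∈ {1, …, ρ}; and |rows_i| = k for each i ∈ {ρ+1, …, ν}. Then ⌊n̂/k̃⌋·κ·(k̃ − k) + ν·k ≤ κ·n̂; equivalently, κ/ν ≥ k/(n̂ − ⌊n̂/k̃⌋·(k̃ − k)). -/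
/-- Double-counting bound for a PPC systematic achievable rate matrix, with rows
identified with their supports `rows i ⊆ {1, …, n̂}`: if every column index belongs
to exactly `κ` of the sets `rows i`, the first `ρ = ⌊n̂/k̃⌋·κ` sets have size at
least `k̃`, and the remaining `ν − ρ` sets have size exactly `k`, then
`⌊n̂/k̃⌋·κ·(k̃ − k) + ν·k ≤ κ·n̂` (equivalently, `κ/ν ≥ k/(n̂ − ⌊n̂/k̃⌋·(k̃ − k))`). -/
theorem ppc_systematic_double_counting (k kt nhat κ ν ρ : ℕ)
    (hkkt : k ≤ kt) (hktn : kt ≤ nhat)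
    (hρ : ρ = nhat / kt * κ) (hρν : ρ ≤ ν)
    (rows : Fin ν → Finset (Fin nhat))
    (hcol : ∀ j : Fin nhat, (Finset.univ.filter fun i => j ∈ rows i).card = κ)
    (hbig : ∀ i : Fin ν, (i : ℕ) < ρ → kt ≤ (rows i).card)
    (hsmall : ∀ i : Fin ν, ρ ≤ (i : ℕ) → (rows i).card = k) :
    nhat / kt * κ * (kt - k) + ν * k ≤ κ * nhat := by
  -- total sum of row sizes equals κ * nhat
  have hsum : ∑ i : Fin ν, (rows i).card = κ * nhat := by
    have h1 : ∀ i : Fin ν, (rows i).card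
        = ∑ j : Fin nhat, if j ∈ rows i then 1 else 0 := by
      intro i
      rw [← Finset.card_filter, Finset.filter_mem_eq_inter, Finset.univ_inter]
    calc ∑ i : Fin ν, (rows i).card
        = ∑ i : Fin ν, ∑ j : Fin nhat, if j ∈ rows i then 1 else 0 := by
          simp_rw [h1]
      _ = ∑ j : Fin nhat, ∑ i : Fin ν, if j ∈ rows i then 1 else 0 :=
          Finset.sum_comm
      _ = ∑ j : Fin nhat, (Finset.univ.filter fun i => j ∈ rows i).card := by
          simp_rw [Finset.card_filter]
      _ = ∑ _j : Fin nhat, κ := by simp_rw [hcol]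
      _ = κ * nhat := by simp [Finset.card_univ, Nat.mul_comm]
  -- the set of "big" rows
  set S : Finset (Fin ν) := Finset.univ.filter fun i => (i : ℕ) < ρ with hS
  have hScard : S.card = ρ := by
    rcases eq_or_lt_of_le hρν with h | h
    · have : S = Finset.univ := by
        ext i; simp only [hS, Finset.mem_filter, Finset.mem_univ, true_and, iff_true]; omega
      rw [this, Finset.card_univ, Fintype.card_fin, h]
    · have : S = Finset.Iio (⟨ρ, h⟩ : Fin ν) := by
        ext i; simp [hS, Fin.lt_def]
      rw [this, Fin.card_Iio]
  have hsplit : ∑ i ∈ S, (rows i).card + ∑ i ∈ Sᶜ, (rows i).card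
      = ∑ i : Fin ν, (rows i).card :=
    Finset.sum_add_sum_compl S _
  have hbigsum : ρ * kt ≤ ∑ i ∈ S, (rows i).card := by
    calc ρ * kt = ∑ _i ∈ S, kt := by rw [Finset.sum_const, hScard, smul_eq_mul]
      _ ≤ ∑ i ∈ S, (rows i).card := by
          apply Finset.sum_le_sum
          intro i hi
          exact hbig i (by simpa [hS] using hi)
  have hsmallsum : ∑ i ∈ Sᶜ, (rows i).card = (ν - ρ) * k := by
    have hc : Sᶜ.card = ν - ρ := by
      rw [Finset.card_compl, hScard, Fintype.card_fin]
    calc ∑ i ∈ Sᶜ, (rows i).card = ∑ _i ∈ Sᶜ, k := by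
          apply Finset.sum_congr rfl
          intro i hi
          exact hsmall i (by simpa [hS] using (Finset.mem_compl.mp hi))
      _ = (ν - ρ) * k := by rw [Finset.sum_const, hc, smul_eq_mul]
  -- combine
  have key : ρ * kt + (ν - ρ) * k ≤ κ * nhat := by
    rw [← hsum, ← hsplit, ← hsmallsum]
    exact Nat.add_le_add_right hbigsum _
  rw [← hρ]
  have e1 : ρ * (kt - k) = ρ * kt - ρ * k := Nat.mul_sub ..
  have hA : ρ * k ≤ ρ * kt := Nat.mul_le_mul_left ρ hkkt
  have hB : ρ * k ≤ ν * k := Nat.mul_le_mul_right k hρν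
  have e2 : (ν - ρ) * k = ν * k - ρ * k := Nat.sub_mul ν ρ k
  omega
end

section
/- Let k, k̃, n̂ be integers with 1 ≤ k ≤ k̃ ≤ n̂ and suppose Γ := n̂ − ⌊n̂/k̃⌋·k̃ satisfies Γ ≤ k. Set δ := ⌊n̂/k̃⌋, ρ := δ·k, and ν := ρ + Γ. Then there exists a family of subsets rows_1, …, rows_ν of {1, …, n̂} such that: every column index j ∈ {1, …, n̂} belongs to exactly k of the sets rows_i; |rows_i| = k̃ for each i ∈ {1, …, ρ}; and rows_i = {1, …, k} for each i ∈ {ρ+1, …, ν}. -/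
lemma aux_fin_card {n : ℕ} (p : Fin n → Prop) [DecidablePred p]
    (q : ℕ → Prop) [DecidablePred q] (hpq : ∀ j : Fin n, p j ↔ q j.val) :
    (Finset.univ.filter p).card = ((Finset.range n).filter q).card := by
  apply Finset.card_bij (fun j _ => j.val)
  · intro a ha
    simp only [Finset.mem_filter, Finset.mem_univ, true_and] at ha
    simp only [Finset.mem_filter, Finset.mem_range]
    exact ⟨a.isLt, (hpq a).1 ha⟩
  · intro a _ b _ h; exact Fin.ext h
  · intro b hb
    simp only [Finset.mem_filter, Finset.mem_range] at hb
    refine ⟨⟨b, hb.1⟩, ?_, rfl⟩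
    simp only [Finset.mem_filter, Finset.mem_univ, true_and]
    exact (hpq ⟨b, hb.1⟩).2 hb.2

lemma count_div_eq {n d c : ℕ} (hd : 0 < d) (h : (c + 1) * d ≤ n) :
    ((Finset.range n).filter (fun j => j / d = c)).card = d := by
  have hset : (Finset.range n).filter (fun j => j / d = c)
      = Finset.Ico (c * d) ((c + 1) * d) := by
    ext j
    simp only [Finset.mem_filter, Finset.mem_range, Finset.mem_Ico]
    constructor
    · rintro ⟨hj, rfl⟩
      have h3 : j / d * d + j % d = j := Nat.div_add_mod' j d
      have h4 : j % d < d := Nat.mod_lt j hd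
      rw [add_mul, one_mul]
      omega
    · rintro ⟨h1, h2⟩
      exact ⟨lt_of_lt_of_le h2 h, Nat.div_eq_of_lt_le h1 h2⟩
  rw [hset, Nat.card_Ico, add_mul, one_mul]
  omega

lemma filter_range_and {n m : ℕ} (h : m ≤ n) (X : ℕ → Prop) [DecidablePred X] :
    (Finset.range n).filter (fun j => j < m ∧ X j) = (Finset.range m).filter X := by
  ext j
  simp only [Finset.mem_filter, Finset.mem_range]
  constructor
  · rintro ⟨_, hm, hx⟩; exact ⟨hm, hx⟩
  · rintro ⟨hm, hx⟩; exact ⟨lt_of_lt_of_le hm h, hm, hx⟩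

lemma card_filter_not {s : Finset ℕ} (p : ℕ → Prop) [DecidablePred p] :
    (s.filter (fun n => ¬ p n)).card = s.card - (s.filter p).card := by
  rw [Finset.filter_not, Finset.card_sdiff_of_subset (Finset.filter_subset _ _)]

lemma modsub_eq {m c i : ℕ} (hc : c < m) (hi : i < m) :
    (c + m - i) % m = if i ≤ c then c - i else c + m - i := by
  split
  · have h1 : c + m - i = (c - i) + m := by omega
    rw [h1, Nat.add_mod_right, Nat.mod_eq_of_lt (by omega)]
  · rw [Nat.mod_eq_of_lt (by omega)]

lemma count_mod_L2 {m Γ c : ℕ} (hc : c < m) (hΓ : Γ ≤ m) :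
    ((Finset.range m).filter (fun x => (c + m - x) % m < Γ)).card = Γ := by
  conv_rhs => rw [← Finset.card_range Γ]
  have key : ∀ x < m, (c + m - ((c + m - x) % m)) % m = x := by
    intro x hx
    rw [modsub_eq hc hx]
    split
    · rw [modsub_eq hc (by omega)]
      split <;> omega
    · rw [modsub_eq hc (by omega)]
      split <;> omega
  apply Finset.card_bij' (fun x _ => (c + m - x) % m) (fun t _ => (c + m - t) % m)
  · intro x hx
    simp only [Finset.mem_filter, Finset.mem_range] at hx ⊢
    exact hx.2
  · intro t ht
    simp only [Finset.mem_range] at ht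
    simp only [Finset.mem_filter, Finset.mem_range]
    have h1 : (c + m - t) % m < m := Nat.mod_lt _ (by omega)
    refine ⟨h1, ?_⟩
    rw [key t (by omega)]
    exact ht
  · intro x hx
    simp only [Finset.mem_filter, Finset.mem_range] at hx
    exact key x hx.1
  · intro t ht
    simp only [Finset.mem_range] at ht
    exact key t (by omega)

lemma modadd_eq {m t b : ℕ} (ht : t < m) (hb : b < m) :
    (t + b) % m = if t + b < m then t + b else t + b - m := by
  split
  · exact Nat.mod_eq_of_lt (by omega)
  · have h1 : t + b = (t + b - m) + m := by omega
    conv_lhs => rw [h1]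
    rw [Nat.add_mod_right, Nat.mod_eq_of_lt (by omega)]

lemma count_mod_L1 {m Γ b : ℕ} (hb : b < m) (hΓ : Γ ≤ m) :
    ((Finset.range m).filter (fun x => (x + m - b) % m < Γ)).card = Γ := by
  conv_rhs => rw [← Finset.card_range Γ]
  have key1 : ∀ x < m, ((x + m - b) % m + b) % m = x := by
    intro x hx
    rw [modsub_eq hx hb]
    split
    · rw [modadd_eq (by omega) hb]; split <;> omega
    · rw [modadd_eq (by omega) hb]; split <;> omega
  have key2 : ∀ t < m, ((t + b) % m + m - b) % m = t := by
    intro t ht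
    rw [modadd_eq ht hb]
    split
    · rw [modsub_eq (by omega) hb]; split <;> omega
    · rw [modsub_eq (by omega) hb]; split <;> omega
  apply Finset.card_bij' (fun x _ => (x + m - b) % m) (fun t _ => (t + b) % m)
  · intro x hx
    simp only [Finset.mem_filter, Finset.mem_range] at hx ⊢
    exact hx.2
  · intro t ht
    simp only [Finset.mem_range] at ht
    simp only [Finset.mem_filter, Finset.mem_range]
    have h1 : (t + b) % m < m := Nat.mod_lt _ (by omega)
    refine ⟨h1, ?_⟩
    rw [key2 t (by omega)]
    exact ht
  · intro x hx
    simp only [Finset.mem_filter, Finset.mem_range] at hx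
    exact key1 x hx.1
  · intro t ht
    simp only [Finset.mem_range] at ht
    exact key2 t (by omega)

def ppcCond (k kt nhat i j : ℕ) : Prop :=
  if j < nhat / kt * kt then
    (j / kt = i / k ∧
      ¬(i / k = 0 ∧ j < k ∧ (j + k - i % k) % k < nhat - nhat / kt * kt))
  else i / k = 0

instance (k kt nhat i j : ℕ) : Decidable (ppcCond k kt nhat i j) := by
  unfold ppcCond; infer_instance

/-- Existence of the family of row supports of a PPC systematic achievable rate
matrix with `(κ, ν) = (k, ⌊n̂/k̃⌋·k + Γ)` where `Γ = n̂ − ⌊n̂/k̃⌋·k̃ ≤ k`: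
there are subsets `rows_1, …, rows_ν` of `{1, …, n̂}` such that every column index
belongs to exactly `k` of them, the first `ρ = ⌊n̂/k̃⌋·k` of them have size `k̃`,
and the remaining ones equal `{1, …, k}`. -/
theorem ppc_systematic_matrix_exists (k kt nhat : ℕ)
    (hk : 1 ≤ k) (hkkt : k ≤ kt) (hktn : kt ≤ nhat)
    (hΓ : nhat - nhat / kt * kt ≤ k) :
    ∃ rows : Fin (nhat / kt * k + (nhat - nhat / kt * kt)) → Finset (Fin nhat),
      (∀ j : Fin nhat, (Finset.univ.filter fun i => j ∈ rows i).card = k) ∧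
      (∀ i : Fin (nhat / kt * k + (nhat - nhat / kt * kt)),
        (i : ℕ) < nhat / kt * k → (rows i).card = kt) ∧
      (∀ i : Fin (nhat / kt * k + (nhat - nhat / kt * kt)),
        nhat / kt * k ≤ (i : ℕ) →
          rows i = Finset.univ.filter fun j : Fin nhat => (j : ℕ) < k) := by
  have hkt : 0 < kt := le_trans hk hkkt
  have hδ1 : 1 ≤ nhat / kt := (Nat.one_le_div_iff hkt).2 hktn
  have hδkt : nhat / kt * kt ≤ nhat := Nat.div_mul_le_self nhat kt
  have hktδkt : kt ≤ nhat / kt * kt := Nat.le_mul_of_pos_left kt hδ1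
  have hkρ : k ≤ nhat / kt * k := Nat.le_mul_of_pos_left k hδ1
  refine ⟨fun i => Finset.univ.filter
      (fun j : Fin nhat =>
        if (i : ℕ) < nhat / kt * k then ppcCond k kt nhat i j
        else (j : ℕ) < k), ?_, ?_, ?_⟩
  · -- column counts
    intro j
    have hJ : (j : ℕ) < nhat := j.isLt
    have h1 : (Finset.univ.filter fun i : Fin (nhat / kt * k + (nhat - nhat / kt * kt)) =>
        j ∈ Finset.univ.filter (fun j' : Fin nhat =>
          if (i : ℕ) < nhat / kt * k then ppcCond k kt nhat i j' else (j' : ℕ) < k))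
        = Finset.univ.filter (fun i : Fin (nhat / kt * k + (nhat - nhat / kt * kt)) =>
            (fun n => if n < nhat / kt * k then ppcCond k kt nhat n j
              else (j : ℕ) < k) i.val) :=
      Finset.filter_congr (fun i _ => by
        simp only [Finset.mem_filter, Finset.mem_univ, true_and])
    have h1b := aux_fin_card
      (fun i : Fin (nhat / kt * k + (nhat - nhat / kt * kt)) =>
        (fun n => if n < nhat / kt * k then ppcCond k kt nhat n j
          else (j : ℕ) < k) i.val)
      (fun n => if n < nhat / kt * k then ppcCond k kt nhat n j else (j : ℕ) < k)
      (fun i => Iff.rfl)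
    rw [h1, h1b]
    -- split range into [0, ρ) and [ρ, ρ + Γ)
    rw [Finset.range_eq_Ico,
      ← Finset.Ico_union_Ico_eq_Ico (Nat.zero_le (nhat / kt * k))
        (Nat.le_add_right _ _),
      Finset.filter_union,
      Finset.card_union_of_disjoint
        (Finset.disjoint_filter_filter (Finset.Ico_disjoint_Ico_consecutive _ _ _))]
    have hpiece1 : (Finset.Ico 0 (nhat / kt * k)).filter
        (fun n => if n < nhat / kt * k then ppcCond k kt nhat n j else (j : ℕ) < k)
        = (Finset.range (nhat / kt * k)).filter (fun n => ppcCond k kt nhat n j) := by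
      rw [← Finset.range_eq_Ico]
      exact Finset.filter_congr (fun n hn => by
        rw [if_pos (Finset.mem_range.1 hn)])
    rw [hpiece1]
    by_cases hcase1 : nhat / kt * kt ≤ (j : ℕ)
    · -- extra column
      have hjk : ¬ ((j : ℕ) < k) := by omega
      have h2 : (Finset.Ico (nhat / kt * k) (nhat / kt * k + (nhat - nhat / kt * kt))).filter
          (fun n => if n < nhat / kt * k then ppcCond k kt nhat n j else (j : ℕ) < k) = ∅ := by
        apply Finset.filter_false_of_mem
        intro n hn
        rw [if_neg (not_lt.2 (Finset.mem_Ico.1 hn).1)]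
        exact hjk
      have h3 : (Finset.range (nhat / kt * k)).filter (fun n => ppcCond k kt nhat n j)
          = (Finset.range (nhat / kt * k)).filter (fun n => n < k) := by
        apply Finset.filter_congr
        intro n _
        unfold ppcCond
        rw [if_neg (not_lt.2 hcase1)]
        rw [Nat.div_eq_zero_iff_lt hk]
      have h4 : (Finset.range (nhat / kt * k)).filter (fun n => n < k)
          = Finset.range k := by
        ext n
        simp only [Finset.mem_filter, Finset.mem_range]
        omega
      rw [h2, h3, h4, Finset.card_empty, Finset.card_range]
      omega
    · push_neg at hcase1
      by_cases hcase2 : k ≤ (j : ℕ)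
      · -- middle column
        have hjk : ¬ ((j : ℕ) < k) := not_lt.2 hcase2
        have h2 : (Finset.Ico (nhat / kt * k) (nhat / kt * k + (nhat - nhat / kt * kt))).filter
            (fun n => if n < nhat / kt * k then ppcCond k kt nhat n j else (j : ℕ) < k) = ∅ := by
          apply Finset.filter_false_of_mem
          intro n hn
          rw [if_neg (not_lt.2 (Finset.mem_Ico.1 hn).1)]
          exact hjk
        have h3 : (Finset.range (nhat / kt * k)).filter (fun n => ppcCond k kt nhat n j)
            = (Finset.range (nhat / kt * k)).filter (fun n => n / k = (j : ℕ) / kt) := by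
          apply Finset.filter_congr
          intro n _
          unfold ppcCond
          rw [if_pos hcase1]
          constructor
          · rintro ⟨h, _⟩; exact h.symm
          · intro h; exact ⟨h.symm, fun hc => hjk hc.2.1⟩
        have hc : (j : ℕ) / kt < nhat / kt := (Nat.div_lt_iff_lt_mul hkt).2 hcase1
        rw [h2, h3, Finset.card_empty,
          count_div_eq hk (Nat.mul_le_mul_right k hc)]
        omega
      · -- systematic column j < k
        push_neg at hcase2
        have h2 : (Finset.Ico (nhat / kt * k) (nhat / kt * k + (nhat - nhat / kt * kt))).filter
            (fun n => if n < nhat / kt * k then ppcCond k kt nhat n j else (j : ℕ) < k)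
            = Finset.Ico (nhat / kt * k) (nhat / kt * k + (nhat - nhat / kt * kt)) := by
          apply Finset.filter_true_of_mem
          intro n hn
          rw [if_neg (not_lt.2 (Finset.mem_Ico.1 hn).1)]
          exact hcase2
        have h3 : (Finset.range (nhat / kt * k)).filter (fun n => ppcCond k kt nhat n j)
            = (Finset.range (nhat / kt * k)).filter
                (fun n => n < k ∧ ¬(((j : ℕ) + k - n % k) % k < nhat - nhat / kt * kt)) := by
          apply Finset.filter_congr
          intro n _
          unfold ppcCond
          rw [if_pos hcase1]
          have hj0 : (j : ℕ) / kt = 0 := (Nat.div_eq_zero_iff_lt hkt).2 (by omega)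
          rw [hj0]
          constructor
          · rintro ⟨h0, hnot⟩
            have hn0 : n < k := (Nat.div_eq_zero_iff_lt hk).1 h0.symm
            exact ⟨hn0, fun hM => hnot ⟨h0.symm, hcase2, hM⟩⟩
          · rintro ⟨hn0, hM⟩
            have h0 : n / k = 0 := (Nat.div_eq_zero_iff_lt hk).2 hn0
            exact ⟨h0.symm, fun hc => hM hc.2.2⟩
        have h4 : (Finset.range (nhat / kt * k)).filter
            (fun n => n < k ∧ ¬(((j : ℕ) + k - n % k) % k < nhat - nhat / kt * kt))
            = (Finset.range k).filter
                (fun n => ¬(((j : ℕ) + k - n % k) % k < nhat - nhat / kt * kt)) :=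
          filter_range_and hkρ _
        have h5 : (Finset.range k).filter
            (fun n => ¬(((j : ℕ) + k - n % k) % k < nhat - nhat / kt * kt))
            = (Finset.range k).filter
                (fun n => ¬(((j : ℕ) + k - n) % k < nhat - nhat / kt * kt)) :=
          Finset.filter_congr (fun n hn => by
            rw [Nat.mod_eq_of_lt (Finset.mem_range.1 hn)])
        rw [h2, h3, h4, h5,
          card_filter_not (fun n => ((j : ℕ) + k - n) % k < nhat - nhat / kt * kt),
          count_mod_L2 hcase2 hΓ, Finset.card_range, Nat.card_Ico]
        omega
  · -- row cards
    intro i hi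
    beta_reduce
    have h1 : (Finset.univ.filter (fun j' : Fin nhat =>
        if (i : ℕ) < nhat / kt * k then ppcCond k kt nhat i j' else (j' : ℕ) < k))
        = Finset.univ.filter (fun j' : Fin nhat => ppcCond k kt nhat i j'.val) :=
      Finset.filter_congr (fun j' _ => by rw [if_pos hi])
    have h1b := aux_fin_card (fun j' : Fin nhat => ppcCond k kt nhat (i : ℕ) j'.val)
      (ppcCond k kt nhat (i : ℕ)) (fun _ => Iff.rfl)
    rw [h1, h1b]
    by_cases ha0 : (i : ℕ) / k = 0
    · -- first block of rows
      rw [Finset.range_eq_Ico,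
        ← Finset.Ico_union_Ico_eq_Ico (Nat.zero_le (nhat / kt * kt)) hδkt,
        Finset.filter_union,
        Finset.card_union_of_disjoint
          (Finset.disjoint_filter_filter (Finset.Ico_disjoint_Ico_consecutive _ _ _))]
      have h2 : (Finset.Ico (nhat / kt * kt) nhat).filter (ppcCond k kt nhat i)
          = Finset.Ico (nhat / kt * kt) nhat := by
        apply Finset.filter_true_of_mem
        intro n hn
        unfold ppcCond
        rw [if_neg (not_lt.2 (Finset.mem_Ico.1 hn).1)]
        exact ha0
      have h3 : (Finset.Ico 0 (nhat / kt * kt)).filter (ppcCond k kt nhat i)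
          = (Finset.range (nhat / kt * kt)).filter
              (fun n => n < kt ∧
                ¬(n < k ∧ (n + k - (i : ℕ) % k) % k < nhat - nhat / kt * kt)) := by
        rw [← Finset.range_eq_Ico]
        apply Finset.filter_congr
        intro n hn
        unfold ppcCond
        rw [if_pos (Finset.mem_range.1 hn), ha0]
        constructor
        · rintro ⟨h0, hnot⟩
          exact ⟨(Nat.div_eq_zero_iff_lt hkt).1 h0, fun hc => hnot ⟨rfl, hc⟩⟩
        · rintro ⟨h0, hnot⟩
          exact ⟨(Nat.div_eq_zero_iff_lt hkt).2 h0, fun hc => hnot hc.2⟩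
      have h4 : (Finset.range (nhat / kt * kt)).filter
          (fun n => n < kt ∧
            ¬(n < k ∧ (n + k - (i : ℕ) % k) % k < nhat - nhat / kt * kt))
          = (Finset.range kt).filter
              (fun n => ¬(n < k ∧ (n + k - (i : ℕ) % k) % k < nhat - nhat / kt * kt)) :=
        filter_range_and hktδkt _
      have h5 : (Finset.range kt).filter
          (fun n => n < k ∧ (n + k - (i : ℕ) % k) % k < nhat - nhat / kt * kt)
          = (Finset.range k).filter
              (fun n => (n + k - (i : ℕ) % k) % k < nhat - nhat / kt * kt) :=
        filter_range_and hkkt _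
      have hL1 := count_mod_L1 (m := k) (b := (i : ℕ) % k)
        (Nat.mod_lt _ hk) hΓ
      rw [h2, h3, h4,
        card_filter_not (fun n => n < k ∧ (n + k - (i : ℕ) % k) % k < nhat - nhat / kt * kt),
        h5, hL1, Finset.card_range, Nat.card_Ico]
      omega
    · -- other rows
      have ha : (i : ℕ) / k < nhat / kt := (Nat.div_lt_iff_lt_mul hk).2 hi
      have h3 : (Finset.range nhat).filter (ppcCond k kt nhat i)
          = (Finset.range nhat).filter (fun n => n / kt = (i : ℕ) / k) := by
        apply Finset.filter_congr
        intro n _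
        unfold ppcCond
        by_cases hn2 : n < nhat / kt * kt
        · rw [if_pos hn2]
          exact ⟨fun h => h.1, fun h => ⟨h, fun hc => ha0 hc.1⟩⟩
        · rw [if_neg hn2]
          constructor
          · exact fun h => absurd h ha0
          · intro h
            exfalso
            have hge : nhat / kt ≤ n / kt :=
              (Nat.le_div_iff_mul_le hkt).2 (not_lt.1 hn2)
            omega
      have hsucc : ((i : ℕ) / k + 1) * kt ≤ nhat :=
        le_trans (Nat.mul_le_mul_right kt ha) hδkt
      rw [h3, count_div_eq hkt hsucc]
  · -- last rows
    intro i hi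
    ext j
    simp only [Finset.mem_filter, Finset.mem_univ, true_and]
    rw [if_neg (not_lt.2 hi)]
end

section
/- Fix integers n, k, g with k ≥ 1, g ≥ 1 and g(k−1)+1 < n, set k̃ = g(k−1)+1, let n̂ and ν be as defined in the context (so that k < ν), and fix a real number H ≥ 0. Let M(f,g) = C(g+f, g) − 1 and let μ : ℕ → ℕ satisfy f ≤ μ(f) for all f. Define, for f ≥ 1, R^S(f) = (k/n̂)·((ν−k)/k)·H / (1 − (k/ν)^{min(μ(f), M(f,g))} − (min(μ(f), M(f,g)) − f)·(1 − k/ν)·(k/ν)^{μ(f)−1}). Then R^S(f) converges, as f → ∞, to ((ν − k)/n̂)·H. -/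
open Filter

/-- **Asymptotic systematic PPC rate (Corollary 2, second case form).** For an
`[n,k]` RS-coded DSS with systematic Lagrange encoding, `k̃ = g(k−1)+1 < n`
(so that `k < ν`), `M(f,g) = C(g+f,g) − 1`, and `μ(f) ≥ f` candidate polynomial
functions, the achievable systematic PPC rate
`R^S(f) = (k/n̂)((ν−k)/k) H / (1 − (k/ν)^{min(μ(f),M(f,g))}
          − (min(μ(f),M(f,g)) − f)(1 − k/ν)(k/ν)^{μ(f)−1})`
converges, as `f → ∞`, to `((ν − k)/n̂)·H`. -/
theorem sys_ppc_rate_asymptotic (n k g : ℕ) (hk : 1 ≤ k) (hg : 1 ≤ g)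
    (hn : g * (k - 1) + 1 < n) (hkν : k < nuV k (g * (k - 1) + 1) n)
    (H : ℝ) (hH : 0 ≤ H) (μ : ℕ → ℕ) (hμ : ∀ f, f ≤ μ f) :
    Tendsto
      (fun f : ℕ =>
        ((k : ℝ) / (nhat k (g * (k - 1) + 1) n : ℝ)) *
            (((nuV k (g * (k - 1) + 1) n : ℝ) - (k : ℝ)) / (k : ℝ)) * H /
          (1 - ((k : ℝ) / (nuV k (g * (k - 1) + 1) n : ℝ))
                  ^ (min (μ f) ((g + f).choose g - 1))
            - ((min (μ f) ((g + f).choose g - 1) : ℝ) - (f : ℝ)) *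
                (1 - (k : ℝ) / (nuV k (g * (k - 1) + 1) n : ℝ)) *
                ((k : ℝ) / (nuV k (g * (k - 1) + 1) n : ℝ)) ^ (μ f - 1)))
      atTop
      (nhds ((((nuV k (g * (k - 1) + 1) n : ℝ) - (k : ℝ)) /
        (nhat k (g * (k - 1) + 1) n : ℝ)) * H)) := by
  set ν : ℕ := nuV k (g * (k - 1) + 1) n with hν
  set N : ℕ := nhat k (g * (k - 1) + 1) n with hNdef
  have hν0 : 0 < ν := lt_of_le_of_lt (Nat.zero_le k) hkν
  have hN0 : 0 < N := by
    rw [hNdef]; unfold nhat; split_ifs <;> omega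
  set r : ℝ := (k : ℝ) / (ν : ℝ) with hr
  have hνR : (0:ℝ) < (ν : ℝ) := by exact_mod_cast hν0
  have hr0 : 0 < r := div_pos (by exact_mod_cast hk) hνR
  have hr1 : r < 1 := (div_lt_one hνR).2 (by exact_mod_cast hkν)
  set m : ℕ → ℕ := fun f => min (μ f) ((g + f).choose g - 1) with hm
  have hmf : ∀ f, f ≤ m f := by
    intro f
    refine le_min (hμ f) ?_
    have h1 : f + 1 ≤ (g + f).choose g := by
      have he : (g + f).choose g = (g + f).choose f := by
        rw [← Nat.choose_symm (by omega : f ≤ g + f)]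
        congr 1; omega
      rw [he]
      calc f + 1 = (f + 1).choose f := (Nat.choose_succ_self_right f).symm
        _ ≤ (g + f).choose f := Nat.choose_le_choose f (by omega)
    omega
  -- the denominator tends to 1
  have h1 : Tendsto (fun f : ℕ => r ^ m f) atTop (nhds 0) :=
    (tendsto_pow_atTop_nhds_zero_of_lt_one hr0.le hr1).comp
      (tendsto_atTop_mono hmf tendsto_id)
  have h2 : Tendsto (fun f : ℕ => ((m f : ℝ) - (f : ℝ)) * (1 - r) * r ^ (μ f - 1))
      atTop (nhds 0) := by
    have hub : Tendsto (fun f : ℕ => ((g + f : ℕ) : ℝ) ^ g * r ^ (f - 1)) atTop (nhds 0) := by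
      have hbase : Tendsto (fun j : ℕ => (j : ℝ) ^ g * r ^ j) atTop (nhds 0) :=
        tendsto_pow_const_mul_const_pow_of_lt_one g hr0.le hr1
      have hcomp : Tendsto (fun f : ℕ => ((f + g : ℕ) : ℝ) ^ g * r ^ (f + g) * (r ^ (g + 1))⁻¹)
          atTop (nhds (0 * (r ^ (g + 1))⁻¹)) :=
        (hbase.comp (tendsto_add_atTop_nat g)).mul_const _
      rw [zero_mul] at hcomp
      refine hcomp.congr' ?_
      filter_upwards [eventually_ge_atTop 1] with f hf
      have hgf : f + g = g + f := by omega
      have hsplit : r ^ (f + g) = r ^ (g + 1) * r ^ (f - 1) := by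
        rw [← pow_add]; congr 1; omega
      rw [hsplit, hgf]
      field_simp
    refine squeeze_zero (fun f => ?_) (fun f => ?_) hub
    · have hA : (0:ℝ) ≤ (m f : ℝ) - (f : ℝ) := by
        have : (f:ℝ) ≤ (m f : ℝ) := by exact_mod_cast hmf f
        linarith
      exact mul_nonneg (mul_nonneg hA (by linarith)) (by positivity)
    · have hA : ((m f : ℝ) - (f : ℝ)) ≤ ((g + f : ℕ) : ℝ) ^ g := by
        have h1 : m f ≤ (g + f) ^ g := le_trans (min_le_right _ _)
          (le_trans (Nat.sub_le _ _) (Nat.choose_le_pow (g + f) g))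
        have h2 : (m f : ℝ) ≤ (((g + f) ^ g : ℕ) : ℝ) := by exact_mod_cast h1
        push_cast at h2 ⊢
        linarith [Nat.cast_nonneg (α := ℝ) f]
      have hB : r ^ (μ f - 1) ≤ r ^ (f - 1) :=
        pow_le_pow_of_le_one hr0.le hr1.le (by have := hμ f; omega)
      have h0A : (0:ℝ) ≤ (m f : ℝ) - (f : ℝ) := by
        have : (f:ℝ) ≤ (m f : ℝ) := by exact_mod_cast hmf f
        linarith
      calc ((m f : ℝ) - (f : ℝ)) * (1 - r) * r ^ (μ f - 1)
          ≤ ((m f : ℝ) - (f : ℝ)) * 1 * r ^ (μ f - 1) := by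
            apply mul_le_mul_of_nonneg_right _ (by positivity)
            apply mul_le_mul_of_nonneg_left (by linarith) h0A
        _ = ((m f : ℝ) - (f : ℝ)) * r ^ (μ f - 1) := by ring
        _ ≤ ((g + f : ℕ) : ℝ) ^ g * r ^ (f - 1) :=
            mul_le_mul hA hB (by positivity) (by positivity)
  have hD : Tendsto (fun f : ℕ => 1 - r ^ m f - ((m f : ℝ) - (f : ℝ)) * (1 - r) * r ^ (μ f - 1))
      atTop (nhds 1) := by
    have := (tendsto_const_nhds (x := (1:ℝ)) (f := atTop (α := ℕ))).sub h1 |>.sub h2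
    simpa using this
  have hmain : Tendsto
      (fun f : ℕ => (((ν : ℝ) - (k : ℝ)) / (N : ℝ) * H) /
        (1 - r ^ m f - ((m f : ℝ) - (f : ℝ)) * (1 - r) * r ^ (μ f - 1)))
      atTop (nhds ((((ν : ℝ) - (k : ℝ)) / (N : ℝ) * H) / 1)) :=
    tendsto_const_nhds.div hD one_ne_zero
  rw [div_one] at hmain
  refine hmain.congr (fun f => ?_)
  have hk0 : (k:ℝ) ≠ 0 := by positivity
  have hN0' : (N:ℝ) ≠ 0 := by positivity
  have hch : 1 ≤ (g + f).choose g := Nat.choose_pos (Nat.le_add_right g f)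
  have hc : ((m f : ℕ) : ℝ) = min ((μ f : ℕ) : ℝ) (((g + f).choose g : ℝ) - 1) := by
    simp [hm, Nat.cast_min, Nat.cast_sub hch]
  rw [← hc]
  congr 1
  field_simp
end
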